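/- For every integer k ≥ 2, μ^ctd_l(k) ≥ ρ_l(k−1)/2 and μ^ctd_u(k) ≤ ρ_u(k−1). -/

import Mathlib

open Filter

/-- A `k`-clause over `n` propositional variables: a set of `k` literals
(pairs of a variable and a sign) over `k` distinct variables. -/
def Clause (n k : ℕ) : Type :=
  {C : Finset (Fin n × Bool) // C.card = k ∧ (C.image Prod.fst).card = k}

/-- A controlled instance over `A` universal and `E` existential variables,
with `c`-clauses over the existential variables: a function assigning to each
of the `2A` literals over the universal variables a `c`-clause over the
existential variables. (For `k`-clauses in the matrix, take `c = k - 1`.) -/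
def CtdInst (A E c : ℕ) : Type := (Fin A × Bool) → Clause E c

/-- The QBF `∀X∃Y F_f` for a controlled instance `f` is true: for every
assignment `I` of the universal variables there is an assignment `J` of the
existential variables such that every clause `l ∨ f(l)` of the matrix is
satisfied by the combined assignment. -/
def CtdTrue {A E c : ℕ} (f : CtdInst A E c) : Prop :=
  ∀ I : Fin A → Bool, ∃ J : Fin E → Bool, ∀ l : Fin A × Bool,
    I l.1 = l.2 ∨ ∃ p ∈ (f l).val, J p.1 = p.2

/-- `q^ctd(k,A,E)`: the fraction of controlled instances `f` (with
`(k-1)`-clauses over the existential variables) for which `∀X∃Y F_f` is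
true. -/
noncomputable def qCtd (k A E : ℕ) : ℝ :=
  (Nat.card {f : CtdInst A E (k - 1) // CtdTrue f} : ℝ) /
    (Nat.card (CtdInst A E (k - 1)) : ℝ)

/-- The set of `ρ > 0` for which random controlled QBFs with `A = ⌊ρE⌋` are
almost surely true. -/
def ctdTrueSet (k : ℕ) : Set ℝ :=
  {ρ : ℝ | 0 < ρ ∧
    Tendsto (fun E : ℕ => qCtd k ⌊ρ * (E : ℝ)⌋₊ E) atTop (nhds 1)}

/-- The set of `ρ > 0` for which random controlled QBFs with `A = ⌊ρE⌋` are
almost surely false. -/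
def ctdFalseSet (k : ℕ) : Set ℝ :=
  {ρ : ℝ | 0 < ρ ∧
    Tendsto (fun E : ℕ => qCtd k ⌊ρ * (E : ℝ)⌋₊ E) atTop (nhds 0)}

/-- `μ^ctd_l(k)`. -/
noncomputable def muCtdL (k : ℕ) : ℝ := sSup (ctdTrueSet k)

/-- `μ^ctd_u(k)`. -/
noncomputable def muCtdU (k : ℕ) : ℝ := sInf (ctdFalseSet k)

/-- An assignment `σ` satisfies a clause if it agrees with the clause's sign
on at least one variable of the clause. -/
def ClauseSat {n k : ℕ} (σ : Fin n → Bool) (C : Clause n k) : Prop :=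
  ∃ l ∈ C.val, σ l.1 = l.2

/-- A `k`-CNF formula with `m` clauses (an `m`-tuple of `k`-clauses) is
satisfiable if some assignment satisfies all of its clauses. -/
def CNFSat {n k m : ℕ} (F : Fin m → Clause n k) : Prop :=
  ∃ σ : Fin n → Bool, ∀ i, ClauseSat σ (F i)

/-- `pSat k n m` is the fraction of the `m`-tuples of `k`-clauses over an
`n`-element variable set that are satisfiable. -/
noncomputable def pSat (k n m : ℕ) : ℝ :=
  (Nat.card {F : Fin m → Clause n k // CNFSat F} : ℝ) /
    (Nat.card (Fin m → Clause n k) : ℝ)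

/-- The set of `ρ > 0` such that random `k`-CNF formulas with `⌊ρn⌋` clauses
are almost surely satisfiable. -/
def satSet (k : ℕ) : Set ℝ :=
  {ρ : ℝ | 0 < ρ ∧
    Tendsto (fun n : ℕ => pSat k n ⌊ρ * (n : ℝ)⌋₊) atTop (nhds 1)}

/-- The set of `ρ > 0` such that random `k`-CNF formulas with `⌊ρn⌋` clauses
are almost surely unsatisfiable. -/
def unsatSet (k : ℕ) : Set ℝ :=
  {ρ : ℝ | 0 < ρ ∧
    Tendsto (fun n : ℕ => pSat k n ⌊ρ * (n : ℝ)⌋₊) atTop (nhds 0)}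

/-- `ρ_l(k)`. -/
noncomputable def rhoL (k : ℕ) : ℝ := sSup (satSet k)

/-- `ρ_u(k)`. -/
noncomputable def rhoU (k : ℕ) : ℝ := sInf (unsatSet k)

/-- for every integer `k ≥ 2`, `μ^ctd_l(k) ≥ ρ_l(k−1)/2` and
`μ^ctd_u(k) ≤ ρ_u(k−1)`. -/
instance clauseFinite (n c : ℕ) : Finite (Clause n c) := Subtype.finite
instance ctdFinite (A E c : ℕ) : Finite (CtdInst A E c) := by unfold CtdInst; infer_instance

lemma clause_nonempty {n c : ℕ} (h : c ≤ n) : Nonempty (Clause n c) := by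
  have hinj : Function.Injective (fun i : Fin c => ((Fin.castLE h i : Fin n), true)) := by
    intro a b hab
    exact Fin.castLE_injective h (congrArg Prod.fst hab)
  refine ⟨⟨Finset.univ.image (fun i : Fin c => ((Fin.castLE h i : Fin n), true)), ?_, ?_⟩⟩
  · rw [Finset.card_image_of_injective _ hinj]; simp
  · rw [Finset.image_image]
    have he : Prod.fst ∘ (fun i : Fin c => ((Fin.castLE h i : Fin n), true)) = Fin.castLE h := rfl
    rw [he, Finset.card_image_of_injective _ (Fin.castLE_injective h)]; simp

lemma key_div {s t N a d : ℕ} (hN : 0 < N) (h : t ≤ s * N ^ d) :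
    (t : ℝ) / (N:ℝ) ^ (a + d) ≤ (s:ℝ) / (N:ℝ) ^ a := by
  have hNR : (0:ℝ) < N := by exact_mod_cast hN
  calc (t:ℝ) / (N:ℝ)^(a+d) ≤ ((s:ℝ) * (N:ℝ)^d) / (N:ℝ)^(a+d) := by
        gcongr
        exact_mod_cast h
    _ = (s:ℝ) / (N:ℝ)^a := by
        rw [pow_add, mul_div_mul_right _ _ (ne_of_gt (pow_pos hNR d))]

lemma card_ctd (A E c : ℕ) :
    Nat.card (CtdInst A E c) = Nat.card (Clause E c) ^ (A + A) := by
  show Nat.card ((Fin A × Bool) → Clause E c) = _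
  rw [Nat.card_fun]
  congr 1
  simp [Nat.card_prod, two_mul]
  omega

lemma card_fun_clause (m E c : ℕ) :
    Nat.card (Fin m → Clause E c) = Nat.card (Clause E c) ^ m := by
  rw [Nat.card_fun]; simp

lemma cnfsat_of_ctdTrue {A E c : ℕ} {f : CtdInst A E c} (hf : CtdTrue f) :
    CNFSat (fun i : Fin A => f (i, true)) := by
  obtain ⟨J, hJ⟩ := hf (fun _ => false)
  refine ⟨J, fun i => ?_⟩
  rcases hJ (i, true) with h | ⟨p, hp, hs⟩
  · simp at h
  · exact ⟨p, hp, hs⟩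

lemma card_true_le (A E c : ℕ) :
    Nat.card {f : CtdInst A E c // CtdTrue f} ≤
      Nat.card ({F : Fin A → Clause E c // CNFSat F} × (Fin A → Clause E c)) := by
  refine Nat.card_le_card_of_injective
    (fun f => (⟨fun i => f.val (i, true), cnfsat_of_ctdTrue f.prop⟩,
               fun i => f.val (i, false))) ?_
  intro f g h
  simp only [Prod.mk.injEq, Subtype.mk.injEq] at h
  obtain ⟨h1, h2⟩ := h
  apply Subtype.ext
  funext l
  obtain ⟨i, b⟩ := l
  cases b
  · exact congrFun h2 i
  · exact congrFun h1 i

noncomputable def litEquiv (A : ℕ) : (Fin A × Bool) ≃ Fin (A + A) :=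
  (Equiv.prodCongr (Equiv.refl (Fin A)) finTwoEquiv.symm).trans
    (finProdFinEquiv.trans (finCongr (by omega)))

lemma card_sat_le (A E c : ℕ) :
    Nat.card {F : Fin (A+A) → Clause E c // CNFSat F} ≤
      Nat.card {f : CtdInst A E c // CtdTrue f} := by
  refine Nat.card_le_card_of_injective
    (fun F => ⟨fun l => F.val (litEquiv A l), ?_⟩) ?_
  · obtain ⟨σ, hσ⟩ := F.prop
    intro I
    exact ⟨σ, fun l => Or.inr (hσ (litEquiv A l))⟩
  · intro F G h
    simp only [Subtype.mk.injEq] at h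
    apply Subtype.ext
    funext j
    have := congrFun (congrArg Subtype.val h) ((litEquiv A).symm j)
    simpa using this

lemma card_sat_mono (E c m d : ℕ) :
    Nat.card {F : Fin (m + d) → Clause E c // CNFSat F} ≤
      Nat.card ({F : Fin m → Clause E c // CNFSat F} × (Fin d → Clause E c)) := by
  refine Nat.card_le_card_of_injective
    (fun F => (⟨fun i => F.val (finSumFinEquiv (.inl i)), ?_⟩,
               fun j => F.val (finSumFinEquiv (.inr j)))) ?_
  · obtain ⟨σ, hσ⟩ := F.prop
    exact ⟨σ, fun i => hσ _⟩
  · intro F G h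
    simp only [Prod.mk.injEq, Subtype.mk.injEq] at h
    obtain ⟨h1, h2⟩ := h
    apply Subtype.ext
    funext x
    rcases hx : finSumFinEquiv.symm x with i | j
    · have hxe : finSumFinEquiv (Sum.inl i) = x := by rw [← hx, Equiv.apply_symm_apply]
      rw [← hxe]; exact congrFun h1 i
    · have hxe : finSumFinEquiv (Sum.inr j) = x := by rw [← hx, Equiv.apply_symm_apply]
      rw [← hxe]; exact congrFun h2 j

lemma nat_div_le_one {a b : ℕ} (h : a ≤ b) : (a:ℝ)/b ≤ 1 := by
  rcases Nat.eq_zero_or_pos b with hb | hb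
  · subst hb
    have : a = 0 := Nat.le_zero.mp h
    simp [this]
  · rw [div_le_one (by exact_mod_cast hb)]
    exact_mod_cast h

lemma qCtd_nonneg (k A E : ℕ) : 0 ≤ qCtd k A E := by unfold qCtd; positivity

lemma qCtd_le_one (k A E : ℕ) : qCtd k A E ≤ 1 :=
  nat_div_le_one (Nat.card_le_card_of_injective Subtype.val Subtype.val_injective)

lemma pSat_anti {c n : ℕ} (hN : 0 < Nat.card (Clause n c)) {m m' : ℕ} (h : m ≤ m') :
    pSat c n m' ≤ pSat c n m := by
  obtain ⟨d, rfl⟩ := Nat.exists_eq_add_of_le h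
  unfold pSat
  rw [card_fun_clause, card_fun_clause]
  push_cast
  exact key_div hN (le_trans (card_sat_mono n c m d)
    (le_of_eq (by rw [Nat.card_prod, card_fun_clause])))

lemma qCtd_le_pSat {k A E : ℕ} (hN : 0 < Nat.card (Clause E (k-1))) :
    qCtd k A E ≤ pSat (k-1) E A := by
  unfold qCtd pSat
  rw [card_ctd, card_fun_clause]
  push_cast
  exact key_div hN (le_trans (card_true_le A E (k-1))
    (le_of_eq (by rw [Nat.card_prod, card_fun_clause])))

lemma pSat_le_qCtd {k A E : ℕ} (hN : 0 < Nat.card (Clause E (k-1))) :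
    pSat (k-1) E (A + A) ≤ qCtd k A E := by
  unfold qCtd pSat
  rw [card_ctd, card_fun_clause]
  push_cast
  have := key_div (a := A + A) (d := 0) hN
    (by simpa using card_sat_le A E (k-1))
  simpa using this

theorem stmt_5 (k : ℕ) (hk : 2 ≤ k)
    (hne1 : (satSet (k - 1)).Nonempty) (hbdd1 : BddAbove (satSet (k - 1)))
    (hne0 : (unsatSet (k - 1)).Nonempty)
    (hne1' : (ctdTrueSet k).Nonempty) (hbdd1' : BddAbove (ctdTrueSet k))
    (hne0' : (ctdFalseSet k).Nonempty) :
    rhoL (k - 1) / 2 ≤ muCtdL k ∧ muCtdU k ≤ rhoU (k - 1) := by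
  constructor
  · have hsub : ∀ ρ ∈ satSet (k-1), ρ/2 ∈ ctdTrueSet k := by
      rintro ρ ⟨hρ, hT⟩
      refine ⟨by linarith, ?_⟩
      refine tendsto_of_tendsto_of_tendsto_of_le_of_le' hT tendsto_const_nhds ?_ ?_
      · filter_upwards [eventually_ge_atTop (k-1)] with E hE
        have : Nonempty (Clause E (k-1)) := clause_nonempty hE
        have hN : 0 < Nat.card (Clause E (k-1)) := Nat.card_pos
        have h2A : ⌊ρ/2 * (E:ℝ)⌋₊ + ⌊ρ/2 * (E:ℝ)⌋₊ ≤ ⌊ρ * (E:ℝ)⌋₊ := by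
          apply Nat.le_floor
          have h1 : (⌊ρ/2 * (E:ℝ)⌋₊ : ℝ) ≤ ρ/2 * E := Nat.floor_le (by positivity)
          push_cast
          linarith
        calc pSat (k-1) E ⌊ρ * (E:ℝ)⌋₊
            ≤ pSat (k-1) E (⌊ρ/2 * (E:ℝ)⌋₊ + ⌊ρ/2 * (E:ℝ)⌋₊) := pSat_anti hN h2A
          _ ≤ qCtd k ⌊ρ/2 * (E:ℝ)⌋₊ E := pSat_le_qCtd hN
      · exact Eventually.of_forall (fun E => qCtd_le_one k _ E)
    have h2 : ∀ ρ ∈ satSet (k-1), ρ ≤ 2 * muCtdL k := by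
      intro ρ hρ
      have := le_csSup hbdd1' (hsub ρ hρ)
      rw [muCtdL]
      linarith
    have := csSup_le hne1 h2
    rw [rhoL]
    linarith
  · have hsub : unsatSet (k-1) ⊆ ctdFalseSet k := by
      rintro ρ ⟨hρ, hT⟩
      refine ⟨hρ, ?_⟩
      refine tendsto_of_tendsto_of_tendsto_of_le_of_le' tendsto_const_nhds hT ?_ ?_
      · exact Eventually.of_forall (fun E => qCtd_nonneg k _ E)
      · filter_upwards [eventually_ge_atTop (k-1)] with E hE
        have : Nonempty (Clause E (k-1)) := clause_nonempty hE
        exact qCtd_le_pSat Nat.card_pos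
    exact csInf_le_csInf ⟨0, fun x hx => le_of_lt hx.1⟩ hne0 hsub
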